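/- Let L be a finite set of positive reals with maximum M = max L, and let K be a natural number. If a finite simple graph G has an L-representation J such that for every real x at most K vertices v have left end point ℓ(v) in the half-open unit interval [x,x+1), then every vertex of G has at most K·(|L|+1)·⌈M⌉ neighbors. -/

import Mathlib

/-- `ℓ, r` form an interval representation of the simple graph `G`: the vertex `v` is
represented by the half-open interval `[ℓ v, r v)` and two distinct vertices are
adjacent iff their intervals intersect. -/
structure IsIntervalRep {V : Type} (G : SimpleGraph V) (ℓ r : V → ℝ) : Prop where
  lt : ∀ v, ℓ v < r v
  adj : ∀ u v : V, u ≠ v →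
    (G.Adj u v ↔ (Set.Ico (ℓ u) (r u) ∩ Set.Ico (ℓ v) (r v)).Nonempty)

lemma ncard_biUnion_le {ι V : Type} [Fintype V] (s : Finset ι) (f : ι → Set V) :
    (⋃ i ∈ s, f i).ncard ≤ ∑ i ∈ s, (f i).ncard := by
  classical
  induction s using Finset.induction with
  | empty => simp
  | insert _ _ hx ih =>
    rename_i a t
    rw [Finset.set_biUnion_insert, Finset.sum_insert hx]
    exact le_trans (Set.ncard_union_le _ _)
      (Nat.add_le_add_left ih _)

/-- If a finite graph `G` has an `L`-representation (`L` a finite set of positive reals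
with maximum `M`) in which every half-open unit interval `[x, x+1)` contains at most `K`
left end points, then every vertex of `G` has at most `K·(|L|+1)·⌈M⌉` neighbours. -/
theorem degree_bound_of_sparse_rep (L : Finset ℝ) (hLne : L.Nonempty)
    (hLpos : ∀ x ∈ L, (0 : ℝ) < x) (K : ℕ)
    (V : Type) [Fintype V] (G : SimpleGraph V) (ℓ r : V → ℝ)
    (hrep : IsIntervalRep G ℓ r) (hlen : ∀ v, r v - ℓ v ∈ L)
    (hK : ∀ x : ℝ, {v : V | ℓ v ∈ Set.Ico x (x + 1)}.ncard ≤ K) :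
    ∀ v : V, (G.neighborSet v).ncard ≤ K * (L.card + 1) * ⌈L.max' hLne⌉₊ := by
  intro v
  classical
  set M : ℝ := L.max' hLne with hM
  set m : ℕ := ⌈M⌉₊ with hm
  have hMle : M ≤ (m : ℝ) := Nat.le_ceil M
  have hlenle : ∀ u, r u - ℓ u ≤ M := fun u => Finset.le_max' _ _ (hlen u)
  -- neighbors have left endpoints in [ℓ v - m, ℓ v + m)
  have hsub : G.neighborSet v ⊆
      ⋃ i ∈ Finset.range (2 * m), {u : V | ℓ u ∈ Set.Ico (ℓ v - m + i) (ℓ v - m + i + 1)} := by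
    intro u hu
    have hadj : G.Adj v u := hu
    have hne : v ≠ u := G.ne_of_adj hadj
    obtain ⟨x, hx⟩ := (hrep.adj v u hne).mp hadj
    have h1 : ℓ u < ℓ v + M := by
      have : ℓ u ≤ x := hx.2.1
      have : ℓ u < r v := lt_of_le_of_lt hx.2.1 hx.1.2
      linarith [hlenle v]
    have h2 : ℓ v - M < ℓ u := by
      have : ℓ v < r u := lt_of_le_of_lt hx.1.1 hx.2.2
      linarith [hlenle u]
    have hlo : ℓ v - m ≤ ℓ u := by linarith
    have hhi : ℓ u < ℓ v - m + 2 * m := by push_cast; linarith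
    set i : ℕ := ⌊ℓ u - (ℓ v - m)⌋₊ with hi
    have hnn : (0 : ℝ) ≤ ℓ u - (ℓ v - m) := by linarith
    have hfl : (i : ℝ) ≤ ℓ u - (ℓ v - m) := Nat.floor_le hnn
    have hfl2 : ℓ u - (ℓ v - m) < i + 1 := Nat.lt_floor_add_one _
    have him : i < 2 * m := by
      have : (i : ℝ) < 2 * m := by push_cast at hhi ⊢; linarith
      exact_mod_cast this
    refine Set.mem_biUnion (Finset.mem_range.mpr him) ?_
    simp only [Set.mem_setOf_eq, Set.mem_Ico]; constructor <;> linarith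
  have hcount : (G.neighborSet v).ncard ≤ ∑ _i ∈ Finset.range (2 * m), K := by
    refine le_trans (Set.ncard_le_ncard hsub (Set.toFinite _)) ?_
    refine le_trans (ncard_biUnion_le _ _) ?_
    exact Finset.sum_le_sum fun i _ => hK _
  simp only [Finset.sum_const, Finset.card_range, smul_eq_mul] at hcount
  calc (G.neighborSet v).ncard ≤ 2 * m * K := hcount
    _ ≤ K * (L.card + 1) * m := by
        have h1 : 1 ≤ L.card := Finset.card_pos.mpr hLne
        nlinarith
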